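/- The Fibonacci word v satisfies v = v₊^R 1 0 v₊, i.e. for the rotation sequence with α = (√5−1)/2: v_{−1} = 1, v_0 = 0, and the reflection about position −1/2 shifted by one maps the positive part onto the negative part; consequently the set of finite subwords of v is closed under reversal. -/

import Mathlib

noncomputable def alpha : ℝ := (Real.sqrt 5 - 1) / 2

noncomputable def v (n : ℤ) : ℕ :=
  if Int.fract ((n : ℝ) * alpha) ∈ Set.Ico (1 - alpha) 1 then 1 else 0

def Occurs (u : ℤ → ℕ) (w : List ℕ) : Prop :=
  ∃ k : ℤ, ∀ i : ℕ, i < w.length → u (k + i) = w.getD i 0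

lemma sqrt5_lt : Real.sqrt 5 < 3 := by
  rw [show (3:ℝ) = Real.sqrt 9 by rw [show (9:ℝ) = 3^2 by norm_num, Real.sqrt_sq]; norm_num]
  exact Real.sqrt_lt_sqrt (by norm_num) (by norm_num)

lemma sqrt5_gt : 2 < Real.sqrt 5 := by
  rw [show (2:ℝ) = Real.sqrt 4 by rw [show (4:ℝ) = 2^2 by norm_num, Real.sqrt_sq]; norm_num]
  exact Real.sqrt_lt_sqrt (by norm_num) (by norm_num)

lemma alpha_pos : 0 < alpha := by
  have := sqrt5_gt; unfold alpha; linarith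

lemma alpha_lt_one : alpha < 1 := by
  have := sqrt5_lt; unfold alpha; linarith

lemma alpha_sq : alpha ^ 2 = 1 - alpha := by
  have h5 : Real.sqrt 5 ^ 2 = 5 := Real.sq_sqrt (by norm_num)
  unfold alpha; ring_nf; nlinarith [h5]

lemma alpha_irrational : Irrational alpha := by
  have h : Irrational (Real.sqrt 5) := (by norm_num : Nat.Prime 5).irrational_sqrt
  have h1 : Irrational (Real.sqrt 5 - (1:ℚ)) := h.sub_ratCast (q := 1)
  have h2 : Irrational ((Real.sqrt 5 - (1:ℚ)) / (2:ℚ)) := h1.div_ratCast (by norm_num)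
  simpa [alpha] using h2

lemma fract_ne_zero {n : ℤ} (hn : n ≠ 0) : Int.fract ((n : ℝ) * alpha) ≠ 0 := by
  intro h
  have hirr : Irrational ((n:ℝ) * alpha) := alpha_irrational.intCast_mul hn
  have : (n:ℝ) * alpha = ⌊(n:ℝ) * alpha⌋ := by
    have := Int.fract_add_floor ((n:ℝ) * alpha)
    rw [h] at this; linarith
  exact hirr.ne_int _ this

lemma fract_ne_one_sub {n : ℤ} (hn : n ≠ -1) :
    Int.fract ((n : ℝ) * alpha) ≠ 1 - alpha := by
  intro h
  have hn1 : n + 1 ≠ 0 := by omega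
  have hirr : Irrational (((n+1) : ℤ) * alpha) := alpha_irrational.intCast_mul hn1
  have hfl : (n:ℝ) * alpha - ⌊(n:ℝ) * alpha⌋ = 1 - alpha := by
    rw [Int.self_sub_floor]; exact h
  have : ((n+1 : ℤ) : ℝ) * alpha = ((⌊(n:ℝ) * alpha⌋ + 1 : ℤ) : ℝ) := by
    push_cast; linarith
  exact hirr.ne_int _ this

/-- The reflection symmetry away from positions -1 and 0. -/
lemma v_symm (n : ℤ) (hn1 : n ≠ -1) (hn0 : n ≠ 0) : v n = v (-1 - n) := by
  set f := Int.fract ((n : ℝ) * alpha) with hf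
  have hf0 : 0 ≤ f := Int.fract_nonneg _
  have hf1 : f < 1 := Int.fract_lt_one _
  have hfne0 : f ≠ 0 := fract_ne_zero hn0
  have hfne : f ≠ 1 - alpha := fract_ne_one_sub hn1
  have ha0 := alpha_pos
  have ha1 := alpha_lt_one
  have key : ((-1 - n : ℤ) : ℝ) * alpha = (-alpha - f) + (-⌊(n:ℝ) * alpha⌋ : ℤ) := by
    have : f = (n:ℝ) * alpha - ⌊(n:ℝ) * alpha⌋ := (Int.self_sub_floor _).symm
    push_cast; rw [this]; ring
  have hfr : Int.fract (((-1 - n : ℤ) : ℝ) * alpha) = Int.fract (-alpha - f) := by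
    rw [key, Int.fract_add_intCast]
  rcases lt_or_gt_of_ne hfne with hlt | hgt
  · -- f < 1 - alpha, both are 0
    have hval : Int.fract (-alpha - f) = 1 - alpha - f := by
      have : -alpha - f = (1 - alpha - f) + ((-1 : ℤ) : ℝ) := by push_cast; ring
      rw [this, Int.fract_add_intCast, Int.fract_eq_self.mpr]
      constructor <;> [linarith; linarith [lt_of_le_of_ne hf0 (Ne.symm hfne0)]]
    unfold v
    rw [hfr, hval]
    have hpos : 0 < f := lt_of_le_of_ne hf0 (Ne.symm hfne0)
    rw [if_neg, if_neg]
    · simp only [Set.mem_Ico, not_and_or, not_le]; left; linarith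
    · simp only [Set.mem_Ico, not_and_or, not_le]; left; linarith
  · -- f > 1 - alpha, both are 1
    have hval : Int.fract (-alpha - f) = 2 - alpha - f := by
      have : -alpha - f = (2 - alpha - f) + ((-2 : ℤ) : ℝ) := by push_cast; ring
      rw [this, Int.fract_add_intCast, Int.fract_eq_self.mpr]
      constructor <;> linarith
    unfold v
    rw [hfr, hval]
    rw [if_pos, if_pos]
    · exact ⟨by linarith, by linarith⟩
    · exact ⟨le_of_lt hgt, hf1⟩

/-- `fib (n+1) * alpha = fib n - (-alpha)^(n+1)` -/
lemma fib_alpha : ∀ n : ℕ, (Nat.fib (n+1) : ℝ) * alpha = Nat.fib n - (-alpha) ^ (n+1) := by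
  intro n
  induction n using Nat.twoStepInduction with
  | zero => simp
  | one =>
    have h1 : Nat.fib (1+1) = 1 := Nat.fib_two
    have h2 : Nat.fib 1 = 1 := Nat.fib_one
    have h3 : (-alpha)^(1+1) = alpha^2 := by rw [show (1+1) = 2 from rfl, neg_sq]
    rw [h1, h2, h3, alpha_sq]
    push_cast; ring
  | more n ih1 ih2 =>
    have hfib : Nat.fib (n+2+1) = Nat.fib (n+1+1) + Nat.fib (n+1) := by
      rw [show n+2+1 = (n+1)+2 from by ring, Nat.fib_add_two]
      exact Nat.add_comm _ _
    have hstep : ((Nat.fib (n+2+1) : ℝ)) * alpha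
        = (Nat.fib (n+1+1) : ℝ) * alpha + (Nat.fib (n+1) : ℝ) * alpha := by
      rw [hfib]; push_cast; ring
    rw [hstep, ih2, ih1]
    have hfib2 : ((Nat.fib (n+2) : ℕ) : ℝ) = (Nat.fib (n+1) : ℝ) + (Nat.fib n : ℝ) := by
      rw [Nat.fib_add_two]; push_cast; ring
    rw [hfib2]
    have hsq : (-alpha)^2 = 1 - alpha := by rw [neg_sq, alpha_sq]
    have hexp : (-alpha) ^ (n+2+1) = (-alpha)^(n+1) * (1 - alpha) := by
      rw [show n+2+1 = (n+1) + 2 from by ring, pow_add, hsq]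
    have hexp2 : (-alpha) ^ (n+1+1) = (-alpha)^(n+1) * (-alpha) := pow_succ _ _
    rw [hexp, hexp2]; ring

lemma m_le_fib : ∀ m : ℕ, m ≤ Nat.fib (2*m+1) := by
  intro m
  induction m with
  | zero => simp
  | succ n ih =>
    have h1 : Nat.fib (2*(n+1)+1) = Nat.fib (2*n+1) + Nat.fib (2*n+1+1) := by
      rw [show 2*(n+1)+1 = (2*n+1) + 2 from by ring, Nat.fib_add_two]
    have h2 : 1 ≤ Nat.fib (2*n+1+1) := by
      have h3 := Nat.fib_mono (show 2 ≤ 2*n+1+1 by omega)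
      rwa [Nat.fib_two] at h3
    omega

/-- Every finite window of v can be shifted to occur entirely at positive positions. -/
lemma shift_positive (k : ℤ) (L : ℕ) : ∃ K : ℤ, 1 ≤ K ∧ ∀ i : ℕ, i < L → v (K + i) = v (k + i) := by
  have ha0 := alpha_pos; have ha1 := alpha_lt_one
  -- define the margin for each position
  set g : ℕ → ℝ := fun i =>
    if Int.fract (((k + i : ℤ) : ℝ) * alpha) < 1 - alpha
    then (1 - alpha) - Int.fract (((k + i : ℤ) : ℝ) * alpha)
    else 1 - Int.fract (((k + i : ℤ) : ℝ) * alpha) with hg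
  have hgpos : ∀ i, 0 < g i := by
    intro i
    simp only [hg]
    split
    · linarith
    · linarith [Int.fract_lt_one (((k + i : ℤ) : ℝ) * alpha)]
  -- a positive lower bound δ₀
  obtain ⟨δ₀, hδ₀pos, hδ₀⟩ : ∃ δ₀ : ℝ, 0 < δ₀ ∧ ∀ i < L, δ₀ ≤ g i := by
    rcases Nat.eq_zero_or_pos L with rfl | hL
    · exact ⟨1, one_pos, fun i hi => absurd hi (Nat.not_lt_zero i)⟩
    · have hne : (Finset.range L).Nonempty := ⟨0, Finset.mem_range.mpr hL⟩
      refine ⟨(Finset.range L).inf' hne g, ?_, ?_⟩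
      · rw [Finset.lt_inf'_iff]; exact fun i _ => hgpos i
      · intro i hi
        exact Finset.inf'_le g (Finset.mem_range.mpr hi)
  -- choose m with alpha^(2m+1) < δ₀ and fib(2m+1) ≥ 1 - k
  obtain ⟨n₁, hn₁⟩ := exists_pow_lt_of_lt_one hδ₀pos ha1
  set m : ℕ := max n₁ (1 - k).toNat with hm
  set q : ℕ := Nat.fib (2*m+1) with hq
  set δ : ℝ := alpha ^ (2*m+1) with hδ
  have hδpos : 0 < δ := pow_pos ha0 _
  have hδlt : δ < δ₀ := by
    calc δ ≤ alpha ^ n₁ := pow_le_pow_of_le_one (le_of_lt ha0) (le_of_lt ha1) (by omega)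
    _ < δ₀ := hn₁
  have hqge : (1 - k).toNat ≤ q := le_trans (le_max_right _ _) (m_le_fib m)
  have hK1 : 1 ≤ k + (q : ℤ) := by omega
  refine ⟨k + q, hK1, ?_⟩
  intro i hi
  -- compute fract at shifted position
  have hfr : Int.fract (((k + q + i : ℤ) : ℝ) * alpha)
      = Int.fract (Int.fract (((k + i : ℤ) : ℝ) * alpha) + δ) := by
    have h2 : (q : ℝ) * alpha = δ + ((Nat.fib (2*m) : ℤ) : ℝ) := by
      have hfib := fib_alpha (2*m)
      have hodd : (-alpha) ^ (2*m+1) = -(alpha ^ (2*m+1)) := Odd.neg_pow ⟨m, by ring⟩ alpha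
      rw [hodd] at hfib
      rw [hq, hδ]
      push_cast
      linarith
    have h3 := Int.fract_add_floor (((k + i : ℤ) : ℝ) * alpha)
    have heq : ((k + q + i : ℤ) : ℝ) * alpha
        = (Int.fract (((k + i : ℤ) : ℝ) * alpha) + δ)
          + ((⌊((k + i : ℤ) : ℝ) * alpha⌋ + (Nat.fib (2*m) : ℤ) : ℤ) : ℝ) := by
      push_cast at h2 h3 ⊢
      linear_combination h2 - h3
    rw [heq, Int.fract_add_intCast]
  set f := Int.fract (((k + i : ℤ) : ℝ) * alpha) with hfdef
  have hf0 : 0 ≤ f := Int.fract_nonneg _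
  have hf1 : f < 1 := Int.fract_lt_one _
  have hgi := hδ₀ i hi
  -- two cases for position k+i
  unfold v
  by_cases hcase : 1 - alpha ≤ f
  · -- g i = 1 - f, so f + δ < 1, stays in [1-alpha, 1)
    have hgieq : g i = 1 - f := by
      simp only [hg, hfdef]
      rw [if_neg (not_lt.mpr hcase)]
    have hflt : f + δ < 1 := by
      have : δ < 1 - f := lt_of_lt_of_le hδlt (by rw [← hgieq]; exact hgi)
      linarith
    have : Int.fract (f + δ) = f + δ := Int.fract_eq_self.mpr ⟨by linarith, hflt⟩
    rw [hfr, ← hfdef, this]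
    rw [if_pos ⟨by linarith, hflt⟩, if_pos ⟨hcase, hf1⟩]
  · push_neg at hcase
    have hgieq : g i = (1 - alpha) - f := by
      simp only [hg, hfdef]
      rw [if_pos hcase]
    have hflt : f + δ < 1 - alpha := by
      have : δ < (1 - alpha) - f := lt_of_lt_of_le hδlt (by rw [← hgieq]; exact hgi)
      linarith
    have : Int.fract (f + δ) = f + δ := Int.fract_eq_self.mpr ⟨by linarith, by linarith⟩
    rw [hfr, ← hfdef, this]
    rw [if_neg, if_neg]
    · simp only [Set.mem_Ico, not_and_or, not_le]; left; linarith
    · simp only [Set.mem_Ico, not_and_or, not_le]; left; linarith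

theorem fibonacci_reflection_symmetry :
    v (-1) = 1 ∧ v 0 = 0 ∧ (∀ n : ℤ, n ≠ -1 → n ≠ 0 → v n = v (-1 - n)) ∧
    ∀ w : List ℕ, Occurs v w → Occurs v w.reverse := by
  have ha0 := alpha_pos; have ha1 := alpha_lt_one
  refine ⟨?_, ?_, fun n h1 h0 => v_symm n h1 h0, ?_⟩
  · unfold v
    have h : Int.fract (((-1 : ℤ) : ℝ) * alpha) = 1 - alpha := by
      have : ((-1 : ℤ) : ℝ) * alpha = (1 - alpha) + ((-1 : ℤ) : ℝ) := by push_cast; ring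
      rw [this, Int.fract_add_intCast, Int.fract_eq_self.mpr ⟨by linarith, by linarith⟩]
    rw [h, if_pos ⟨le_refl _, by linarith⟩]
  · unfold v
    have h : Int.fract (((0 : ℤ) : ℝ) * alpha) = 0 := by norm_num
    rw [h, if_neg]
    simp only [Set.mem_Ico, not_and_or, not_le]; left; linarith
  · rintro w ⟨k, hk⟩
    obtain ⟨K, hK1, hKshift⟩ := shift_positive k w.length
    refine ⟨-K - w.length, ?_⟩
    intro i hi
    rw [List.length_reverse] at hi
    have hL : (0:ℕ) < w.length := Nat.pos_of_ne_zero (by rintro h; rw [h] at hi; exact Nat.not_lt_zero i hi)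
    set j : ℕ := w.length - 1 - i with hj
    have hjlt : j < w.length := by omega
    have hmpos : 1 ≤ K + (j : ℤ) := by
      have : (0:ℤ) ≤ (j:ℤ) := Int.natCast_nonneg j
      omega
    have hsymm := v_symm (K + j) (by omega) (by omega)
    have harg : -K - (w.length : ℤ) + (i : ℕ) = -1 - (K + (j : ℤ)) := by
      have hji : (j : ℤ) = (w.length : ℤ) - 1 - (i : ℤ) := by
        omega
      omega
    rw [harg, ← hsymm, hKshift j hjlt, hk j hjlt]
    rw [List.getD_eq_getElem _ _ hjlt,
        List.getD_eq_getElem _ _ (by simpa using hi),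
        List.getElem_reverse]
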